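/- The Cayley tree 𝒯^k admits a monomer-dimer covering: there exists a set D* ⊆ E of edges such that (i) for any two distinct edges b', b'' ∈ D* the graph distance between them is at least 2 (no vertex of b' is equal or adjacent to a vertex of b''), and (ii) every vertex v ∈ V is at distance at most 1 from D* (v is an endpoint of some edge of D*, or adjacent to an endpoint of some edge of D*). -/

import Mathlib

open Classical

/-- `G` is a Cayley tree with branching number `k`: an infinite connected acyclic
simple graph in which every vertex has exactly `k + 1` neighbors. -/
structure IsCayleyTree {V : Type*} (G : SimpleGraph V) (k : ℕ) : Prop where
  infinite : Infinite V
  connected : G.Connected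
  acyclic : G.IsAcyclic
  degree : ∀ v : V, (G.neighborSet v).ncard = k + 1

/-- A spin configuration takes values in `{-1, +1}`. -/
def IsSpin {V : Type*} (σ : V → ℤ) : Prop := ∀ v, σ v = 1 ∨ σ v = -1

/-- `σ` is frustrated exactly on the edges of `D`: for every edge `{x,y}` of `G`,
`σ x * σ y = -1` if `{x,y} ∈ D` and `σ x * σ y = 1` otherwise. -/
def SatisfiesD {V : Type*} (G : SimpleGraph V) (D : Set (Sym2 V)) (σ : V → ℤ) : Prop :=
  ∀ x y : V, G.Adj x y →
    (s(x, y) ∈ D → σ x * σ y = -1) ∧ (s(x, y) ∉ D → σ x * σ y = 1)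

/-- The excess energy `H(σ) - H(σbase) = J * Σ_{{x,y} ∈ E} (σbase x * σbase y - σ x * σ y)`,
a sum with finitely many nonzero terms when `σ` and `σbase` differ at finitely many sites. -/
noncomputable def excessEnergy {V : Type*} (G : SimpleGraph V) (J : ℝ) (σ σbase : V → ℤ) : ℝ :=
  J * ∑ᶠ e ∈ G.edgeSet,
      ((Sym2.lift ⟨fun x y => σbase x * σbase y - σ x * σ y, fun _ _ => by ring⟩ e : ℤ) : ℝ)

/-- The configuration obtained from `σ` by flipping all spins in `C`. -/
noncomputable def flipSpins {V : Type*} (σ : V → ℤ) (C : Set V) : V → ℤ :=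
  fun v => if v ∈ C then -σ v else σ v

/-- The number `d_D(v)` of edges of `D` incident to the vertex `v`. -/
noncomputable def incidentCount {V : Type*} (D : Set (Sym2 V)) (v : V) : ℕ :=
  {e ∈ D | v ∈ e}.ncard

/-- A set of vertices is connected if any two of its vertices are joined by a
walk staying within the set. -/
def SetConnected {V : Type*} (G : SimpleGraph V) (S : Set V) : Prop :=
  ∀ x ∈ S, ∀ y ∈ S, ∃ p : G.Walk x y, ∀ z ∈ p.support, z ∈ S

open SimpleGraph

section Aux

variable {V : Type*} {G : SimpleGraph V}

private lemma aux_exists_path (hc : G.Connected) (u v : V) :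
    ∃ p : G.Walk u v, p.IsPath ∧ p.length = G.dist u v := by
  obtain ⟨p, hp⟩ := hc.exists_walk_length_eq_dist u v
  exact ⟨p, p.isPath_of_length_eq_dist hp, hp⟩

private lemma aux_path_length (hc : G.Connected) (ha : G.IsAcyclic) {u v : V}
    {p : G.Walk u v} (hp : p.IsPath) : p.length = G.dist u v := by
  obtain ⟨q, hq, hql⟩ := aux_exists_path hc u v
  have he := ha.path_unique ⟨p, hp⟩ ⟨q, hq⟩
  have : p = q := congrArg Subtype.val he
  rw [this, hql]

private lemma aux_concat_path {u v w : V} {p : G.Walk u v} (hp : p.IsPath)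
    (h : G.Adj v w) (hw : w ∉ p.support) : (p.concat h).IsPath := by
  rw [← Walk.isPath_reverse_iff, Walk.reverse_concat, Walk.cons_isPath_iff]
  exact ⟨(Walk.isPath_reverse_iff p).2 hp, by simpa using hw⟩

private lemma aux_level_adj (hc : G.Connected) (ha : G.IsAcyclic) (r : V) {u v : V}
    (h : G.Adj u v) :
    G.dist r v = G.dist r u + 1 ∨ G.dist r u = G.dist r v + 1 := by
  classical
  have hd : G.dist u v = 1 := dist_eq_one_iff_adj.2 h
  have hd' : G.dist v u = 1 := dist_eq_one_iff_adj.2 h.symm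
  have h1 : G.dist r v ≤ G.dist r u + 1 := by
    have := hc.dist_triangle (u := r) (v := u) (w := v); omega
  have h2 : G.dist r u ≤ G.dist r v + 1 := by
    have := hc.dist_triangle (u := r) (v := v) (w := u); omega
  have hne : G.dist r u ≠ G.dist r v := by
    intro he
    obtain ⟨p, hp, hl⟩ := aux_exists_path hc r u
    by_cases hv : v ∈ p.support
    · have ht := aux_path_length hc ha (hp.takeUntil hv)
      have hspec := p.take_spec hv
      have hadd : (p.takeUntil v hv).length + (p.dropUntil v hv).length = p.length := by
        rw [← Walk.length_append, hspec]
      have hzero : (p.dropUntil v hv).length = 0 := by omega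
      exact h.ne' (Walk.eq_of_length_eq_zero hzero)
    · have hq := aux_concat_path hp h hv
      have := aux_path_length hc ha hq
      rw [Walk.length_concat] at this
      omega
  omega

private lemma aux_parent_unique (hc : G.Connected) (ha : G.IsAcyclic) {r v w w' : V}
    (h1 : G.Adj v w) (h2 : G.Adj v w')
    (e1 : G.dist r w + 1 = G.dist r v) (e2 : G.dist r w' + 1 = G.dist r v) : w = w' := by
  classical
  obtain ⟨p, hp, hl⟩ := aux_exists_path hc r w
  obtain ⟨p', hp', hl'⟩ := aux_exists_path hc r w'
  have hv : v ∉ p.support := by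
    intro hv
    have := aux_path_length hc ha (hp.takeUntil hv)
    have := Walk.length_takeUntil_le p hv
    omega
  have hv' : v ∉ p'.support := by
    intro hv'
    have := aux_path_length hc ha (hp'.takeUntil hv')
    have := Walk.length_takeUntil_le p' hv'
    omega
  have hq := aux_concat_path hp h1.symm hv
  have hq' := aux_concat_path hp' h2.symm hv'
  have he := ha.path_unique ⟨p.concat h1.symm, hq⟩ ⟨p'.concat h2.symm, hq'⟩
  have he' : p.concat h1.symm = p'.concat h2.symm := congrArg Subtype.val he
  obtain ⟨hww, -⟩ := Walk.concat_inj he'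
  exact hww

private lemma aux_parent_exists (hc : G.Connected) {r v : V} (h : v ≠ r) :
    ∃ p, G.Adj v p ∧ G.dist r p + 1 = G.dist r v := by
  obtain ⟨w, hw⟩ := hc.exists_walk_length_eq_dist v r
  have hn : G.dist v r ≠ 0 := by
    intro h0; exact h (((hc v r).dist_eq_zero_iff).1 h0)
  cases w with
  | nil => simp at hw; simp at hn
  | cons hadj q =>
    rename_i b
    refine ⟨b, hadj, ?_⟩
    rw [Walk.length_cons] at hw
    have h1 : G.dist b r ≤ q.length := dist_le q
    have h2 : G.dist r b = G.dist b r := dist_comm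
    have h3 : G.dist r v = G.dist v r := dist_comm
    have h4 : G.dist r v ≤ G.dist r b + 1 := by
      have := hc.dist_triangle (u := r) (v := b) (w := v)
      have : G.dist b v = 1 := dist_eq_one_iff_adj.2 hadj.symm
      omega
    omega

end Aux

/-- The Cayley tree admits a monomer-dimer covering: a set `D*` of edges
such that any two distinct edges of `D*` are at graph distance at least 2 (no endpoint
of one is equal or adjacent to an endpoint of the other), and every vertex is at
distance at most 1 from (an endpoint of) some edge of `D*`. -/
theorem monomer_dimer_covering_exists {V : Type*} (G : SimpleGraph V) (k : ℕ)
    (hk : 2 ≤ k) (hG : IsCayleyTree G k) :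
    ∃ Dstar : Set (Sym2 V), Dstar ⊆ G.edgeSet
      ∧ (∀ b' ∈ Dstar, ∀ b'' ∈ Dstar, b' ≠ b'' →
          ∀ x ∈ b', ∀ y ∈ b'', 2 ≤ G.dist x y)
      ∧ (∀ v : V, ∃ b ∈ Dstar, ∃ x ∈ b, G.dist v x ≤ 1) := by
  classical
  obtain ⟨hinf, hc, ha, hdeg⟩ := hG
  haveI := hinf
  obtain ⟨r⟩ : Nonempty V := inferInstance
  have hchild : ∀ v : V, ∃ c, G.Adj v c ∧ G.dist r c = G.dist r v + 1 := by
    intro v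
    by_contra hno
    push_neg at hno
    have hlow : ∀ c, G.Adj v c → G.dist r c + 1 = G.dist r v := by
      intro c hadj
      rcases aux_level_adj hc ha r hadj with h | h
      · exact absurd h (hno c hadj)
      · omega
    have hne0 : (G.neighborSet v).ncard ≠ 0 := by rw [hdeg v]; omega
    obtain ⟨c₀, hc₀⟩ := Set.nonempty_of_ncard_ne_zero hne0
    have hadj₀ : G.Adj v c₀ := hc₀
    have hsub : G.neighborSet v ⊆ {c₀} := by
      intro c hcmem
      have hadjc : G.Adj v c := hcmem
      have := aux_parent_unique hc ha hadjc hadj₀ (hlow c hadjc) (hlow c₀ hadj₀)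
      simp [this]
    have hle := Set.ncard_le_ncard hsub (Set.finite_singleton c₀)
    rw [hdeg v, Set.ncard_singleton] at hle
    omega
  choose f hfadj hflev using hchild
  refine ⟨{e | ∃ u : V, G.dist r u % 3 = 1 ∧ e = s(u, f u)}, ?_, ?_, ?_⟩
  · rintro e ⟨u, -, rfl⟩
    exact G.mem_edgeSet.2 (hfadj u)
  · rintro b' ⟨u, hu, rfl⟩ b'' ⟨u', hu', rfl⟩ hne x hx y hy
    have huu : u ≠ u' := by rintro rfl; exact hne rfl
    have hl : G.dist r (f u) = G.dist r u + 1 := hflev u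
    have hl' : G.dist r (f u') = G.dist r u' + 1 := hflev u'
    rw [Sym2.mem_iff] at hx hy
    have hxy : x ≠ y := by
      rcases hx with rfl | rfl <;> rcases hy with rfl | rfl
      · exact huu
      · rintro rfl; omega
      · rintro rfl; omega
      · intro hff
        have h2' : G.Adj (f u) u' := by rw [hff]; exact (hfadj u').symm
        have e2' : G.dist r u' + 1 = G.dist r (f u) := by rw [hff]; omega
        exact huu (aux_parent_unique hc ha (hfadj u).symm h2' hl.symm e2')
    have hnadj : ¬ G.Adj x y := by
      rcases hx with rfl | rfl <;> rcases hy with rfl | rfl <;> intro hadj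
      · rcases aux_level_adj hc ha r hadj with h | h <;> omega
      · rcases aux_level_adj hc ha r hadj with h | h
        · exact huu (aux_parent_unique hc ha hadj.symm (hfadj u').symm h.symm hl'.symm)
        · omega
      · rcases aux_level_adj hc ha r hadj with h | h
        · omega
        · exact huu (aux_parent_unique hc ha (hfadj u).symm hadj hl.symm h.symm)
      · rcases aux_level_adj hc ha r hadj with h | h <;> omega
    have h0 : G.dist x y ≠ 0 := fun h0 => hxy (((hc x y).dist_eq_zero_iff).1 h0)
    have h1 : G.dist x y ≠ 1 := fun h1 => hnadj (SimpleGraph.dist_eq_one_iff_adj.1 h1)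
    omega
  · intro v
    have hadjd : ∀ a b : V, G.Adj a b → G.dist a b ≤ 1 :=
      fun a b h => le_of_eq (SimpleGraph.dist_eq_one_iff_adj.2 h)
    have h3 : G.dist r v % 3 = 0 ∨ G.dist r v % 3 = 1 ∨ G.dist r v % 3 = 2 := by omega
    rcases h3 with h3 | h3 | h3
    · exact ⟨s(f v, f (f v)), ⟨f v, by have := hflev v; omega, rfl⟩, f v,
        Sym2.mem_mk_left _ _, hadjd _ _ (hfadj v)⟩
    · exact ⟨s(v, f v), ⟨v, h3, rfl⟩, v, Sym2.mem_mk_left _ _,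
        by rw [SimpleGraph.dist_self]; omega⟩
    · have hvr : v ≠ r := by
        rintro rfl; rw [SimpleGraph.dist_self] at h3; omega
      obtain ⟨p, hpadj, hpl⟩ := aux_parent_exists hc hvr
      exact ⟨s(p, f p), ⟨p, by omega, rfl⟩, p, Sym2.mem_mk_left _ _, hadjd _ _ hpadj⟩
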